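/- For every integer r ≥ 3, r^{(r-1)(r-2)} · ((r-2)!)^2 < (r-1)^{(r+1)(r-2)}. -/

import Mathlib

lemma lemC (m : ℕ) : 2 * (m+1)^(m+1) ≤ (m+2)^(m+1) := by
  have h : (0:ℝ) < (m:ℝ)+1 := by positivity
  have hb := one_add_mul_le_pow (a := 1/((m:ℝ)+1)) ((by norm_num : (-2:ℝ) ≤ 0).trans (by positivity)) (m+1)
  have h2 : (2:ℝ) ≤ (1 + 1/((m:ℝ)+1))^(m+1) := by
    calc (2:ℝ) = 1 + ((m:ℕ)+1 : ℕ) * (1/((m:ℝ)+1)) := by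
          push_cast; field_simp; norm_num
      _ ≤ _ := hb
  have key : (1 + 1/((m:ℝ)+1)) = ((m:ℝ)+2)/((m:ℝ)+1) := by field_simp; ring
  rw [key, div_pow, le_div_iff₀ (by positivity)] at h2
  have h3 : (2:ℝ) * ((m:ℝ)+1)^(m+1) ≤ ((m:ℝ)+2)^(m+1) := h2
  exact_mod_cast h3

lemma lemA (m : ℕ) : 2^m * m.factorial ≤ (m+1)^m := by
  induction m with
  | zero => simp
  | succ m ih =>
    calc 2^(m+1) * (m+1).factorial = (2*(m+1)) * (2^m * m.factorial) := by
          rw [Nat.factorial_succ]; ring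
      _ ≤ (2*(m+1)) * (m+1)^m := by
          exact Nat.mul_le_mul_left _ ih
      _ = 2 * (m+1)^(m+1) := by ring
      _ ≤ (m+2)^(m+1) := lemC m

lemma lemB (m : ℕ) (hm : 1 ≤ m) : (m+1)^m < 4 * m^m := by
  have hm0 : (0:ℝ) < (m:ℝ) := by exact_mod_cast hm
  have h1 : (1 + 1/(m:ℝ)) < Real.exp (1/(m:ℝ)) := by
    have := Real.add_one_lt_exp (x := 1/(m:ℝ)) (by positivity)
    linarith
  have h2 : (1 + 1/(m:ℝ))^m < Real.exp (1/(m:ℝ)) ^ m := by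
    apply pow_lt_pow_left₀ h1 (by positivity) (by omega)
  have h3 : Real.exp (1/(m:ℝ)) ^ m = Real.exp 1 := by
    rw [← Real.exp_nat_mul]
    congr 1
    field_simp
  have h4 : (1 + 1/(m:ℝ))^m < 4 := by
    have := Real.exp_one_lt_d9
    calc (1 + 1/(m:ℝ))^m < Real.exp 1 := h3 ▸ h2
      _ < 4 := by linarith
  have key : (1 + 1/(m:ℝ)) = ((m:ℝ)+1)/(m:ℝ) := by field_simp
  rw [key, div_pow, div_lt_iff₀ (by positivity)] at h4
  have h5 : ((m:ℝ)+1)^m < 4 * (m:ℝ)^m := by linarith [h4]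
  exact_mod_cast h5

theorem pow_factorial_ineq (r : ℕ) (hr : 3 ≤ r) :
    r ^ ((r - 1) * (r - 2)) * (r - 2).factorial ^ 2 < (r - 1) ^ ((r + 1) * (r - 2)) := by
  obtain ⟨m, rfl⟩ : ∃ m, r = m + 2 := ⟨r - 2, by omega⟩
  have hm : 1 ≤ m := by omega
  simp only [Nat.add_sub_cancel, show m + 2 - 1 = m + 1 from rfl]
  -- goal: (m+2)^((m+1)*m) * m.factorial^2 < (m+1)^((m+2+1)*m)
  have hA : 4^m * m.factorial^2 ≤ (m+1)^(2*m) := by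
    have := Nat.pow_le_pow_left (lemA m) 2
    have h4 : (4:ℕ)^m = (2^m)^2 := by rw [← pow_mul, mul_comm, pow_mul]; norm_num
    calc 4^m * m.factorial^2 = (2^m * m.factorial)^2 := by rw [h4, mul_pow]
      _ ≤ ((m+1)^m)^2 := this
      _ = (m+1)^(2*m) := by rw [← pow_mul, mul_comm]
  have hB : (m+2)^((m+1)*m) < 4^m * (m+1)^((m+1)*m) := by
    have h1 : ((m+2)^(m+1))^m < (4 * (m+1)^(m+1))^m :=
      Nat.pow_lt_pow_left (by
        have := lemB (m+1) (by omega)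
        -- (m+2)^(m+1) < 4*(m+1)^(m+1)
        convert this using 2) (by omega)
    calc (m+2)^((m+1)*m) = ((m+2)^(m+1))^m := by rw [pow_mul]
      _ < (4 * (m+1)^(m+1))^m := h1
      _ = 4^m * (m+1)^((m+1)*m) := by rw [mul_pow, ← pow_mul]
  have hpos : 0 < 4^m := Nat.pow_pos (by norm_num)
  have key : 4^m * ((m+2)^((m+1)*m) * m.factorial^2) < 4^m * (m+1)^((m+2+1)*m) := by
    calc 4^m * ((m+2)^((m+1)*m) * m.factorial^2)
        = (m+2)^((m+1)*m) * (4^m * m.factorial^2) := by ring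
      _ ≤ (m+2)^((m+1)*m) * (m+1)^(2*m) := Nat.mul_le_mul_left _ hA
      _ < (4^m * (m+1)^((m+1)*m)) * (m+1)^(2*m) :=
          mul_lt_mul_of_pos_right hB (by positivity)
      _ = 4^m * (m+1)^((m+2+1)*m) := by
          rw [mul_assoc, ← pow_add]
          ring_nf
  exact Nat.lt_of_mul_lt_mul_left key
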